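/- The profile map on enhanced level graphs is not injective. Concretely, for the type μ=(4) (genus 3): let H be the three-level graph with vertices v0 (genus 1, level 0), v1 (genus 1, level −1) and v2 (genus 0, level −2, carrying the single leg of order 4), with one edge v0v1 of enhancement 1, one edge v1v2 of enhancement 3, and one long edge v0v2 of enhancement 1; let G be the three-level graph with vertices w0 (genus 1, level 0), w1 (genus 0, level −1) and w2 (genus 0, level −2, carrying the leg of order 4), with two edges w0w1 both of enhancement 1 and two edges w1w2 of enhancements 1 and 3. Then G and H are both realizable, they are not isomorphic, and yet δ_1(G) ≅ δ_1(H) and δ_2(G) ≅ δ_2(H), so G and H have the same profile. -/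

import Mathlib

/-- An *enhanced level graph* of type `μ : Fin n → ℤ`: a finite multigraph
with vertex set `V` and edge set `E` (each edge `e` consisting of an upper
half-edge `e⁺` attached at `src e` and a lower half-edge `e⁻` attached at
`dst e`), together with `n` labelled legs, a genus function, a level function
normalised to take values in `{0, -1, …, -L}` and an enhancement `κ` which
vanishes exactly on the horizontal edges. -/
structure ELG (n : ℕ) (μ : Fin n → ℤ) where
  V : Type
  E : Type
  fintypeV : Fintype V
  decEqV : DecidableEq V
  fintypeE : Fintype E
  decEqE : DecidableEq E
  /-- the vertex carrying the upper half-edge `e⁺` -/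
  src : E → V
  /-- the vertex carrying the lower half-edge `e⁻` -/
  dst : E → V
  /-- the vertex carrying the `i`-th labelled leg -/
  legAt : Fin n → V
  genus : V → ℕ
  level : V → ℤ
  /-- the levels are `0, -1, …, -L` -/
  L : ℕ
  level_mem : ∀ v, -(L : ℤ) ≤ level v ∧ level v ≤ 0
  level_surj : ∀ j : Fin (L + 1), ∃ v, level v = -(j : ℤ)
  level_mono : ∀ e, level (dst e) ≤ level (src e)
  /-- the enhancement `κ` -/
  kappa : E → ℕ
  kappa_zero_iff : ∀ e, kappa e = 0 ↔ level (src e) = level (dst e)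

attribute [instance] ELG.fintypeV ELG.decEqV ELG.fintypeE ELG.decEqE

namespace ELG

variable {n : ℕ} {μ : Fin n → ℤ}

/-- The order function: the `i`-th leg has order `μ i`, the upper half-edge of
`e` has order `κ e - 1`, the lower one has order `-κ e - 1`.  The *degree* of a
vertex is the sum of the orders of all legs and half-edges attached to it. -/
def deg (Γ : ELG n μ) (v : Γ.V) : ℤ :=
  (∑ i ∈ Finset.univ.filter (fun i => Γ.legAt i = v), μ i)
    + (∑ e ∈ Finset.univ.filter (fun e => Γ.src e = v), ((Γ.kappa e : ℤ) - 1))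
    + (∑ e ∈ Finset.univ.filter (fun e => Γ.dst e = v), (-(Γ.kappa e : ℤ) - 1))

/-- The enhancement is *admissible* if `deg v = 2 g(v) - 2` for every vertex. -/
def Admissible (Γ : ELG n μ) : Prop :=
  ∀ v, Γ.deg v = 2 * (Γ.genus v : ℤ) - 2

/-- Number of legs at a vertex. -/
def numLegsAt (Γ : ELG n μ) (v : Γ.V) : ℕ :=
  (Finset.univ.filter (fun i => Γ.legAt i = v)).card

/-- Number of half-edges at a vertex (a loop counts twice). -/
def numHalfEdgesAt (Γ : ELG n μ) (v : Γ.V) : ℕ :=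
  (Finset.univ.filter (fun e => Γ.src e = v)).card
    + (Finset.univ.filter (fun e => Γ.dst e = v)).card

/-- Stability: `2 g(v) - 2` plus the number of legs and half-edges at `v` is
positive for every vertex `v`. -/
def Stable (Γ : ELG n μ) : Prop :=
  ∀ v, 0 < 2 * (Γ.genus v : ℤ) - 2 + (Γ.numLegsAt v : ℤ) + (Γ.numHalfEdgesAt v : ℤ)

/-- The edge `e` connects the vertices `a` and `b` (in either direction). -/
def Connects (Γ : ELG n μ) (e : Γ.E) (a b : Γ.V) : Prop :=
  (Γ.src e = a ∧ Γ.dst e = b) ∨ (Γ.src e = b ∧ Γ.dst e = a)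

/-- Adjacency via some edge. -/
def Adj (Γ : ELG n μ) (a b : Γ.V) : Prop := ∃ e, Γ.Connects e a b

/-- Connectivity of the graph. -/
def Connected (Γ : ELG n μ) : Prop :=
  Nonempty Γ.V ∧ ∀ a b : Γ.V, Relation.ReflTransGen Γ.Adj a b

/-- The total genus `g = ∑ g(v) + |E| - |V| + 1` of a connected graph. -/
def totalGenus (Γ : ELG n μ) : ℤ :=
  (∑ v, (Γ.genus v : ℤ)) + (Fintype.card Γ.E : ℤ) - (Fintype.card Γ.V : ℤ) + 1

/-- No horizontal edges. -/
def NoHorizontal (Γ : ELG n μ) : Prop :=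
  ∀ e, Γ.level (Γ.src e) ≠ Γ.level (Γ.dst e)

/-- The multiset of absolute values `b` of the *negative* orders `-b` of the
legs and half-edges at a vertex `v`. -/
def poleOrders (Γ : ELG n μ) (v : Γ.V) : Multiset ℤ :=
  ((Finset.univ.filter (fun i => Γ.legAt i = v ∧ μ i < 0)).val.map (fun i => -μ i))
    + ((Finset.univ.filter (fun e => Γ.src e = v ∧ ((Γ.kappa e : ℤ) - 1) < 0)).val.map
        (fun e => -((Γ.kappa e : ℤ) - 1)))
    + ((Finset.univ.filter (fun e => Γ.dst e = v)).val.map (fun e => (Γ.kappa e : ℤ) + 1))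

/-- A vertex is *inconvenient* if it has genus `0`, no leg or half-edge at it
has order `-1`, and among the absolute values `b₁, …, b_p` of the negative
orders at `v` there is some `bᵢ > b₁ + ⋯ + b_p - p - 1`. -/
def Inconvenient (Γ : ELG n μ) (v : Γ.V) : Prop :=
  Γ.genus v = 0 ∧ (1 : ℤ) ∉ Γ.poleOrders v ∧
    ∃ b ∈ Γ.poleOrders v,
      (Γ.poleOrders v).sum - (Multiset.card (Γ.poleOrders v) : ℤ) - 1 < b

/-- There is a simple cycle based at `v` all of whose vertices lie on levels
`≥ ℓ(v)`. -/
def HasHighCycleAt (Γ : ELG n μ) (v : Γ.V) : Prop :=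
  ∃ (m : ℕ) (hm : 2 ≤ m) (vs : Fin m → Γ.V) (es : Fin m → Γ.E),
    Function.Injective vs ∧ Function.Injective es ∧ vs ⟨0, by omega⟩ = v ∧
    (∀ k : Fin m, Γ.Connects (es k) (vs k) (vs ⟨(k.val + 1) % m, Nat.mod_lt _ (by omega)⟩)) ∧
    (∀ k : Fin m, Γ.level v ≤ Γ.level (vs k))

/-- Realizability of a connected stable admissible enhanced level graph without
horizontal edges over a holomorphic stratum: every inconvenient vertex lies on
a simple cycle not passing below its own level. -/
def Realizable (Γ : ELG n μ) : Prop :=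
  Γ.Connected ∧ Γ.Stable ∧ Γ.Admissible ∧ Γ.NoHorizontal ∧
    ∀ v, Γ.Inconvenient v → Γ.HasHighCycleAt v

/-- An isomorphism of enhanced level graphs of the same type: bijections of
vertices and edges preserving incidence, genus, level, enhancement and fixing
each labelled leg. -/
structure Iso (Γ₁ Γ₂ : ELG n μ) where
  vEquiv : Γ₁.V ≃ Γ₂.V
  eEquiv : Γ₁.E ≃ Γ₂.E
  src_map : ∀ e, Γ₂.src (eEquiv e) = vEquiv (Γ₁.src e)
  dst_map : ∀ e, Γ₂.dst (eEquiv e) = vEquiv (Γ₁.dst e)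
  leg_map : ∀ i, Γ₂.legAt i = vEquiv (Γ₁.legAt i)
  genus_map : ∀ v, Γ₂.genus (vEquiv v) = Γ₁.genus v
  level_map : ∀ v, Γ₂.level (vEquiv v) = Γ₁.level v
  kappa_map : ∀ e, Γ₂.kappa (eEquiv e) = Γ₁.kappa e

/-- The edge `e` crosses the `i`-th level passage (between levels `-(i-1)` and
`-i`). -/
def Crosses (Γ : ELG n μ) (e : Γ.E) (i : ℕ) : Prop :=
  -(i : ℤ) + 1 ≤ Γ.level (Γ.src e) ∧ Γ.level (Γ.dst e) ≤ -(i : ℤ)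

instance (Γ : ELG n μ) (e : Γ.E) (i : ℕ) : Decidable (Γ.Crosses e i) :=
  inferInstanceAs (Decidable (_ ∧ _))

/-- The set of edges contracted by the undegeneration `δ_I`: those crossing no
level passage in `I`. -/
def contractedEdges (Γ : ELG n μ) (I : Finset ℕ) : Finset Γ.E :=
  Finset.univ.filter (fun e => ∀ i ∈ I, ¬ Γ.Crosses e i)

/-- Two vertices are related if some edge of `T` connects them. -/
def contractRel (Γ : ELG n μ) (T : Finset Γ.E) (a b : Γ.V) : Prop :=
  ∃ e ∈ T, Γ.Connects e a b

/-- Witness data exhibiting `Δ` as the undegeneration `δ_I(Γ)`: the vertices of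
`Δ` are the connected components of the edges of `Γ` contracted by `δ_I`, the
edges of `Δ` are the remaining edges with their enhancements, the legs keep
their positions, the genus of a merged vertex is the sum of the genera of its
vertices plus the first Betti number of the merged component, and the level
function is induced by collapsing the contracted level passages. -/
structure UndegenData (Γ : ELG n μ) (I : Finset ℕ) (Δ : ELG n μ) where
  vmap : Γ.V → Δ.V
  vmap_surj : Function.Surjective vmap
  fiber_eq : ∀ a b, vmap a = vmap b ↔
    Relation.EqvGen (Γ.contractRel (Γ.contractedEdges I)) a b
  eEquiv : {e : Γ.E // e ∉ Γ.contractedEdges I} ≃ Δ.E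
  src_map : ∀ e, Δ.src (eEquiv e) = vmap (Γ.src e.val)
  dst_map : ∀ e, Δ.dst (eEquiv e) = vmap (Γ.dst e.val)
  kappa_map : ∀ e, Δ.kappa (eEquiv e) = Γ.kappa e.val
  leg_map : ∀ i, Δ.legAt i = vmap (Γ.legAt i)
  genus_map : ∀ w : Δ.V,
    (Δ.genus w : ℤ) =
      (∑ v ∈ Finset.univ.filter (fun v => vmap v = w), (Γ.genus v : ℤ))
        + (((Γ.contractedEdges I).filter (fun e => vmap (Γ.src e) = w)).card : ℤ)
        - ((Finset.univ.filter (fun v : Γ.V => vmap v = w)).card : ℤ) + 1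
  level_map : ∀ v, Δ.level (vmap v) =
    -(((I.filter (fun i : ℕ => Γ.level v ≤ -(i : ℤ))).card : ℤ))
  newL : Δ.L = I.card

/-- `Δ` is (isomorphic to) the undegeneration `δ_I(Γ)`. -/
def IsUndegenOf (Γ : ELG n μ) (I : Finset ℕ) (Δ : ELG n μ) : Prop :=
  Nonempty (Γ.UndegenData I Δ)

end ELG

open ELG

/-- `Λ` is a realizable `(k+1)`-level graph (without horizontal edges) lying in
the profile `(Γ₁, …, Γ_k)`, i.e. `δ_i(Λ) ≅ Γᵢ` for all `i`. -/
def InProfile {n : ℕ} {μ : Fin n → ℤ} {k : ℕ} (Λ : ELG n μ) (Γs : Fin k → ELG n μ) : Prop :=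
  Λ.Realizable ∧ Λ.L = k ∧ ∀ i : Fin k, Λ.IsUndegenOf {(i : ℕ) + 1} (Γs i)

/-- The profile `(Γ₁, …, Γ_k)` is non-empty. -/
def ProfileNonEmpty {n : ℕ} {μ : Fin n → ℤ} {k : ℕ} (Γs : Fin k → ELG n μ) : Prop :=
  ∃ Λ : ELG n μ, InProfile Λ Γs

/-- The three-level graph `G` of type `μ = (4)`: vertices `w0` (genus 1,
level 0), `w1` (genus 0, level −1), `w2` (genus 0, level −2, carrying the leg
of order 4); two edges `w0w1` of enhancement 1 and two edges `w1w2` of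
enhancements 1 and 3. -/
def Ggraph : ELG 1 ![(4 : ℤ)] where
  V := Fin 3
  E := Fin 4
  fintypeV := inferInstance
  decEqV := inferInstance
  fintypeE := inferInstance
  decEqE := inferInstance
  src := ![0, 0, 1, 1]
  dst := ![1, 1, 2, 2]
  legAt := ![2]
  genus := ![1, 0, 0]
  level := ![0, -1, -2]
  L := 2
  level_mem := by decide
  level_surj := by decide
  level_mono := by decide
  kappa := ![1, 1, 1, 3]
  kappa_zero_iff := by decide

/-- The three-level graph `H` of type `μ = (4)`: vertices `v0` (genus 1,
level 0), `v1` (genus 1, level −1), `v2` (genus 0, level −2, carrying the leg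
of order 4); one edge `v0v1` of enhancement 1, one edge `v1v2` of enhancement 3
and one long edge `v0v2` of enhancement 1. -/
def Hgraph : ELG 1 ![(4 : ℤ)] where
  V := Fin 3
  E := Fin 3
  fintypeV := inferInstance
  decEqV := inferInstance
  fintypeE := inferInstance
  decEqE := inferInstance
  src := ![0, 1, 0]
  dst := ![1, 2, 2]
  legAt := ![2]
  genus := ![1, 1, 0]
  level := ![0, -1, -2]
  L := 2
  level_mem := by decide
  level_surj := by decide
  level_mono := by decide
  kappa := ![1, 3, 1]
  kappa_zero_iff := by decide

section Aux

variable {n : ℕ} {μ : Fin n → ℤ}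

instance (Γ : ELG n μ) (e : Γ.E) (a b : Γ.V) : Decidable (Γ.Connects e a b) := by
  unfold ELG.Connects; infer_instance

instance (Γ : ELG n μ) (a b : Γ.V) : Decidable (Γ.Adj a b) := by
  unfold ELG.Adj; infer_instance

instance (Γ : ELG n μ) (T : Finset Γ.E) (a b : Γ.V) :
    Decidable (Γ.contractRel T a b) := by
  unfold ELG.contractRel; infer_instance

instance (Γ : ELG n μ) : Decidable Γ.Admissible := by
  unfold ELG.Admissible; infer_instance

instance (Γ : ELG n μ) : Decidable Γ.Stable := by
  unfold ELG.Stable; infer_instance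

instance (Γ : ELG n μ) : Decidable Γ.NoHorizontal := by
  unfold ELG.NoHorizontal; infer_instance

instance {α : Type*} (m : Multiset α) (p : α → Prop) [DecidablePred p] :
    Decidable (∃ b ∈ m, p b) :=
  Multiset.decidableExistsMultiset

instance (Γ : ELG n μ) (v : Γ.V) : Decidable (Γ.Inconvenient v) := by
  unfold ELG.Inconvenient; infer_instance

lemma eqvGen_map {α β : Type*} {R : α → α → Prop} {f : α → β}
    (H : ∀ a b, R a b → f a = f b) : ∀ {a b}, Relation.EqvGen R a b → f a = f b := by
  intro a b h
  induction h with
  | rel _ _ h => exact H _ _ h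
  | refl => rfl
  | symm _ _ _ ih => exact ih.symm
  | trans _ _ _ _ _ ih1 ih2 => exact ih1.trans ih2

end Aux

/-- The common undegeneration `δ₁(G) ≅ δ₁(H)`. -/
def Agraph : ELG 1 ![(4 : ℤ)] where
  V := Fin 2
  E := Fin 2
  fintypeV := inferInstance
  decEqV := inferInstance
  fintypeE := inferInstance
  decEqE := inferInstance
  src := ![0, 0]
  dst := ![1, 1]
  legAt := ![1]
  genus := ![1, 1]
  level := ![0, -1]
  L := 1
  level_mem := by decide
  level_surj := by decide
  level_mono := by decide
  kappa := ![1, 1]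
  kappa_zero_iff := by decide

/-- The common undegeneration `δ₂(G) ≅ δ₂(H)`. -/
def Bgraph : ELG 1 ![(4 : ℤ)] where
  V := Fin 2
  E := Fin 2
  fintypeV := inferInstance
  decEqV := inferInstance
  fintypeE := inferInstance
  decEqE := inferInstance
  src := ![0, 0]
  dst := ![1, 1]
  legAt := ![1]
  genus := ![2, 0]
  level := ![0, -1]
  L := 1
  level_mem := by decide
  level_surj := by decide
  level_mono := by decide
  kappa := ![1, 3]
  kappa_zero_iff := by decide

attribute [reducible] Ggraph Hgraph Agraph Bgraph

instance (k : ℕ) : OfNat Ggraph.V k := inferInstanceAs (OfNat (Fin 3) k)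
instance (k : ℕ) : OfNat Ggraph.E k := inferInstanceAs (OfNat (Fin 4) k)
instance (k : ℕ) : OfNat Hgraph.V k := inferInstanceAs (OfNat (Fin 3) k)
instance (k : ℕ) : OfNat Hgraph.E k := inferInstanceAs (OfNat (Fin 3) k)
instance (k : ℕ) : OfNat Agraph.V k := inferInstanceAs (OfNat (Fin 2) k)
instance (k : ℕ) : OfNat Agraph.E k := inferInstanceAs (OfNat (Fin 2) k)
instance (k : ℕ) : OfNat Bgraph.V k := inferInstanceAs (OfNat (Fin 2) k)
instance (k : ℕ) : OfNat Bgraph.E k := inferInstanceAs (OfNat (Fin 2) k)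

def eG1 : {e : Ggraph.E // e ∉ Ggraph.contractedEdges {1}} ≃ Agraph.E where
  toFun e := (if e.val = (0 : Fin 4) then 0 else 1 : Fin 2)
  invFun i := if i = (0 : Fin 2) then ⟨(0 : Fin 4), by decide⟩ else ⟨(1 : Fin 4), by decide⟩
  left_inv := by decide
  right_inv := by decide

def eG2 : {e : Ggraph.E // e ∉ Ggraph.contractedEdges {2}} ≃ Bgraph.E where
  toFun e := (if e.val = (2 : Fin 4) then 0 else 1 : Fin 2)
  invFun i := if i = (0 : Fin 2) then ⟨(2 : Fin 4), by decide⟩ else ⟨(3 : Fin 4), by decide⟩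
  left_inv := by decide
  right_inv := by decide

def eH1 : {e : Hgraph.E // e ∉ Hgraph.contractedEdges {1}} ≃ Agraph.E where
  toFun e := (if e.val = (0 : Fin 3) then 0 else 1 : Fin 2)
  invFun i := if i = (0 : Fin 2) then ⟨(0 : Fin 3), by decide⟩ else ⟨(2 : Fin 3), by decide⟩
  left_inv := by decide
  right_inv := by decide

def eH2 : {e : Hgraph.E // e ∉ Hgraph.contractedEdges {2}} ≃ Bgraph.E where
  toFun e := (if e.val = (2 : Fin 3) then 0 else 1 : Fin 2)
  invFun i := if i = (0 : Fin 2) then ⟨(2 : Fin 3), by decide⟩ else ⟨(1 : Fin 3), by decide⟩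
  left_inv := by decide
  right_inv := by decide

def dataG1 : Ggraph.UndegenData {1} Agraph where
  vmap := (![0, 1, 1] : Fin 3 → Fin 2)
  vmap_surj := by decide
  fiber_eq := by
    intro a b
    constructor
    · intro h
      rcases (show ∀ a b : Fin 3, (![0, 1, 1] : Fin 3 → Fin 2) a = ![0, 1, 1] b →
          a = b ∨ Ggraph.contractRel (Ggraph.contractedEdges {1}) a b by decide) a b h with
        rfl | h'
      · exact Relation.EqvGen.refl a
      · exact Relation.EqvGen.rel a b h'
    · exact eqvGen_map (by decide)
  eEquiv := eG1
  src_map := by decide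
  dst_map := by decide
  kappa_map := by decide
  leg_map := by decide
  genus_map := by decide
  level_map := by decide
  newL := rfl

def dataG2 : Ggraph.UndegenData {2} Bgraph where
  vmap := (![0, 0, 1] : Fin 3 → Fin 2)
  vmap_surj := by decide
  fiber_eq := by
    intro a b
    constructor
    · intro h
      rcases (show ∀ a b : Fin 3, (![0, 0, 1] : Fin 3 → Fin 2) a = ![0, 0, 1] b →
          a = b ∨ Ggraph.contractRel (Ggraph.contractedEdges {2}) a b by decide) a b h with
        rfl | h'
      · exact Relation.EqvGen.refl a
      · exact Relation.EqvGen.rel a b h'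
    · exact eqvGen_map (by decide)
  eEquiv := eG2
  src_map := by decide
  dst_map := by decide
  kappa_map := by decide
  leg_map := by decide
  genus_map := by decide
  level_map := by decide
  newL := rfl

def dataH1 : Hgraph.UndegenData {1} Agraph where
  vmap := (![0, 1, 1] : Fin 3 → Fin 2)
  vmap_surj := by decide
  fiber_eq := by
    intro a b
    constructor
    · intro h
      rcases (show ∀ a b : Fin 3, (![0, 1, 1] : Fin 3 → Fin 2) a = ![0, 1, 1] b →
          a = b ∨ Hgraph.contractRel (Hgraph.contractedEdges {1}) a b by decide) a b h with
        rfl | h'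
      · exact Relation.EqvGen.refl a
      · exact Relation.EqvGen.rel a b h'
    · exact eqvGen_map (by decide)
  eEquiv := eH1
  src_map := by decide
  dst_map := by decide
  kappa_map := by decide
  leg_map := by decide
  genus_map := by decide
  level_map := by decide
  newL := rfl

def dataH2 : Hgraph.UndegenData {2} Bgraph where
  vmap := (![0, 0, 1] : Fin 3 → Fin 2)
  vmap_surj := by decide
  fiber_eq := by
    intro a b
    constructor
    · intro h
      rcases (show ∀ a b : Fin 3, (![0, 0, 1] : Fin 3 → Fin 2) a = ![0, 0, 1] b →
          a = b ∨ Hgraph.contractRel (Hgraph.contractedEdges {2}) a b by decide) a b h with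
        rfl | h'
      · exact Relation.EqvGen.refl a
      · exact Relation.EqvGen.rel a b h'
    · exact eqvGen_map (by decide)
  eEquiv := eH2
  src_map := by decide
  dst_map := by decide
  kappa_map := by decide
  leg_map := by decide
  genus_map := by decide
  level_map := by decide
  newL := rfl

lemma Ggraph_connected : Ggraph.Connected := by
  refine ⟨⟨0⟩, ?_⟩
  have h01 : Ggraph.Adj 0 1 := ⟨0, by decide⟩
  have h10 : Ggraph.Adj 1 0 := ⟨0, by decide⟩
  have h12 : Ggraph.Adj 1 2 := ⟨2, by decide⟩
  have h21 : Ggraph.Adj 2 1 := ⟨2, by decide⟩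
  intro a b
  fin_cases a <;> fin_cases b
  · exact Relation.ReflTransGen.refl
  · exact Relation.ReflTransGen.single h01
  · exact (Relation.ReflTransGen.single h01).tail h12
  · exact Relation.ReflTransGen.single h10
  · exact Relation.ReflTransGen.refl
  · exact Relation.ReflTransGen.single h12
  · exact (Relation.ReflTransGen.single h21).tail h10
  · exact Relation.ReflTransGen.single h21
  · exact Relation.ReflTransGen.refl

lemma Hgraph_connected : Hgraph.Connected := by
  refine ⟨⟨0⟩, ?_⟩
  have h01 : Hgraph.Adj 0 1 := ⟨0, by decide⟩
  have h10 : Hgraph.Adj 1 0 := ⟨0, by decide⟩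
  have h12 : Hgraph.Adj 1 2 := ⟨1, by decide⟩
  have h21 : Hgraph.Adj 2 1 := ⟨1, by decide⟩
  intro a b
  fin_cases a <;> fin_cases b
  · exact Relation.ReflTransGen.refl
  · exact Relation.ReflTransGen.single h01
  · exact (Relation.ReflTransGen.single h01).tail h12
  · exact Relation.ReflTransGen.single h10
  · exact Relation.ReflTransGen.refl
  · exact Relation.ReflTransGen.single h12
  · exact (Relation.ReflTransGen.single h21).tail h10
  · exact Relation.ReflTransGen.single h21
  · exact Relation.ReflTransGen.refl

lemma Ggraph_realizable : Ggraph.Realizable := by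
  refine ⟨Ggraph_connected, by decide, by decide, by decide, ?_⟩
  intro v hv
  fin_cases v
  · exact absurd hv (by decide)
  · exact ⟨2, by norm_num, ![1, 0], ![0, 1], by decide, by decide, by decide, by decide,
      by decide⟩
  · exact ⟨2, by norm_num, ![2, 1], ![2, 3], by decide, by decide, by decide, by decide,
      by decide⟩

lemma Hgraph_realizable : Hgraph.Realizable := by
  refine ⟨Hgraph_connected, by decide, by decide, by decide, ?_⟩
  intro v hv
  fin_cases v
  · exact absurd hv (by decide)
  · exact absurd hv (by decide)
  · exact ⟨3, by norm_num, ![2, 0, 1], ![2, 0, 1], by decide, by decide, by decide, by decide,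
      by decide⟩

/-- the profile map is not injective: `G` and `H` are realizable
and non-isomorphic, yet `δ₁(G) ≅ δ₁(H)` and `δ₂(G) ≅ δ₂(H)`. -/
theorem profile_not_injective :
    Ggraph.Realizable ∧ Hgraph.Realizable ∧
    ¬ Nonempty (Ggraph.Iso Hgraph) ∧
    (∃ A : ELG 1 ![(4 : ℤ)], Ggraph.IsUndegenOf {1} A ∧ Hgraph.IsUndegenOf {1} A) ∧
    (∃ B : ELG 1 ![(4 : ℤ)], Ggraph.IsUndegenOf {2} B ∧ Hgraph.IsUndegenOf {2} B) := by
  refine ⟨Ggraph_realizable, Hgraph_realizable, ?_, ⟨Agraph, ⟨dataG1⟩, ⟨dataH1⟩⟩,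
    ⟨Bgraph, ⟨dataG2⟩, ⟨dataH2⟩⟩⟩
  rintro ⟨iso⟩
  exact (show ∀ x : Fin 3, ¬(Hgraph.level x = Ggraph.level 1 ∧
      Hgraph.genus x = Ggraph.genus 1) by decide) (iso.vEquiv 1)
    ⟨iso.level_map 1, iso.genus_map 1⟩
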